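/- arXiv:1506.00104 — 4 statements merged into one kernel-verified Lean document; each statement's English description precedes it below -/
import Mathlib

section
/- Let g be a real 3×3 matrix with det g = 1, and let q, p : ℝ → ℝ³ be differentiable curves with p(t) · q(t) = 1 and p'(t) = q(t) × q'(t) for all t. Then the curves q̃(t) := g q(t) and p̃(t) := (gᵀ)⁻¹ p(t) also satisfy p̃(t) · q̃(t) = 1 and p̃'(t) = q̃(t) × q̃'(t) for all t. -/
open Matrix

private lemma cross_mulVec_aux (A : Matrix (Fin 3) (Fin 3) ℝ) (u v : Fin 3 → ℝ) :
    (A *ᵥ u) ⨯₃ (A *ᵥ v) = (adjugate A)ᵀ *ᵥ (u ⨯₃ v) := by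
  funext i
  fin_cases i <;>
    simp [crossProduct, mulVec, dotProduct, Fin.sum_univ_three, adjugate_fin_three] <;>
    ring

private lemma deriv_mulVec_aux (A : Matrix (Fin 3) (Fin 3) ℝ) (p : ℝ → Fin 3 → ℝ)
    (hp : Differentiable ℝ p) (t : ℝ) :
    deriv (fun s => A *ᵥ p s) t = A *ᵥ deriv p t := by
  let L : (Fin 3 → ℝ) →L[ℝ] (Fin 3 → ℝ) := LinearMap.toContinuousLinearMap (Matrix.mulVecLin A)
  exact (L.hasFDerivAt.comp_hasDerivAt t (hp t).hasDerivAt).deriv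

/-- SL₃(ℝ) acts by symmetries of the system `p ⬝ᵥ q = 1`, `p' = q × q'`:
if `(q, p)` is a solution, so is `(g q, (gᵀ)⁻¹ p)` for `det g = 1`. -/
theorem SL3_symmetry_of_system (g : Matrix (Fin 3) (Fin 3) ℝ) (hg : g.det = 1)
    (q p : ℝ → Fin 3 → ℝ)
    (hq : Differentiable ℝ q) (hp : Differentiable ℝ p)
    (hpq : ∀ t, p t ⬝ᵥ q t = 1)
    (hode : ∀ t, deriv p t = q t ⨯₃ deriv q t) :
    (∀ t, (g.transpose⁻¹ *ᵥ p t) ⬝ᵥ (g *ᵥ q t) = 1) ∧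
    (∀ t, deriv (fun s => g.transpose⁻¹ *ᵥ p s) t
        = (g *ᵥ q t) ⨯₃ deriv (fun s => g *ᵥ q s) t) := by
  have hdet : IsUnit g.det := by rw [hg]; exact isUnit_one
  have hginv : g⁻¹ = adjugate g := by
    rw [Matrix.inv_def, hg, Ring.inverse_one, one_smul]
  have htinv : g.transpose⁻¹ = (adjugate g)ᵀ := by
    rw [← Matrix.transpose_nonsing_inv, hginv]
  constructor
  · intro t
    rw [dotProduct_comm, ← Matrix.transpose_nonsing_inv, dotProduct_mulVec,
      Matrix.vecMul_transpose, Matrix.mulVec_mulVec, Matrix.nonsing_inv_mul g hdet,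
      Matrix.one_mulVec, dotProduct_comm]
    exact hpq t
  · intro t
    rw [deriv_mulVec_aux _ p hp, deriv_mulVec_aux _ q hq, hode t, htinv, cross_mulVec_aux]
end

section
/- Let A be a real 3×3 matrix with trace zero and b, c ∈ ℝ³. Define the linear map D : Õ → Õ by D(x, q, p, y) = (p·b + c·q, Aq + (x − y)b + p × c, −Aᵀp + b × q + (x − y)c, −(p·b + c·q)). Then D is a derivation of Õ: D(ζ * ζ') = D(ζ) * ζ' + ζ * D(ζ') for all ζ, ζ' ∈ Õ. -/
set_option maxHeartbeats 1000000


open Matrix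

/-- The split-octonions as Zorn vector matrices `(x, q, p, y)`. -/
abbrev Oct : Type := ℝ × (Fin 3 → ℝ) × (Fin 3 → ℝ) × ℝ

/-- Zorn vector-matrix multiplication of split-octonions. -/
def octMul (ζ ζ' : Oct) : Oct :=
  (ζ.1 * ζ'.1 - ζ'.2.2.1 ⬝ᵥ ζ.2.1,
   ζ.1 • ζ'.2.1 + ζ'.2.2.2 • ζ.2.1 + ζ.2.2.1 ⨯₃ ζ'.2.2.1,
   ζ'.1 • ζ.2.2.1 + ζ.2.2.2 • ζ'.2.2.1 + ζ.2.1 ⨯₃ ζ'.2.1,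
   ζ.2.2.2 * ζ'.2.2.2 - ζ.2.2.1 ⬝ᵥ ζ'.2.1)

/-- Cartan's realization `ρ̃(A, b, c)` of a general element of `g₂ = Der(Õ)`. -/
def octD (A : Matrix (Fin 3) (Fin 3) ℝ) (b c : Fin 3 → ℝ) (ζ : Oct) : Oct :=
  (ζ.2.2.1 ⬝ᵥ b + c ⬝ᵥ ζ.2.1,
   A *ᵥ ζ.2.1 + (ζ.1 - ζ.2.2.2) • b + ζ.2.2.1 ⨯₃ c,
   -(A.transpose *ᵥ ζ.2.2.1) + b ⨯₃ ζ.2.1 + (ζ.1 - ζ.2.2.2) • c,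
   -(ζ.2.2.1 ⬝ᵥ b + c ⬝ᵥ ζ.2.1))

/-- For traceless `A` and `b, c ∈ ℝ³`, the map `ρ̃(A, b, c)` is a derivation
of the split-octonions. -/
theorem octD_is_derivation (A : Matrix (Fin 3) (Fin 3) ℝ) (hA : A.trace = 0)
    (b c : Fin 3 → ℝ) :
    ∀ ζ ζ' : Oct,
      octD A b c (octMul ζ ζ')
        = octMul (octD A b c ζ) ζ' + octMul ζ (octD A b c ζ') := by
  have h2 : A 2 2 = -(A 0 0 + A 1 1) := by
    have := hA
    simp [Matrix.trace, Fin.sum_univ_three, Matrix.diag] at this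
    linarith
  intro ζ ζ'
  obtain ⟨x, q, p, y⟩ := ζ
  obtain ⟨x', q', p', y'⟩ := ζ'
  refine Prod.ext ?_ (Prod.ext ?_ (Prod.ext ?_ ?_))
  · simp only [octD, octMul, Prod.fst_add, Prod.snd_add]
    simp only [crossProduct, Matrix.mulVec, dotProduct, Matrix.transpose_apply,
      Fin.sum_univ_three, Pi.add_apply, Pi.smul_apply, Pi.neg_apply, smul_eq_mul,
      LinearMap.mk₂_apply, Matrix.cons_val_zero, Matrix.cons_val_one, Matrix.head_cons,
      Matrix.cons_val_two, Matrix.tail_cons]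
    ring
  · funext i
    fin_cases i <;>
    · simp only [octD, octMul, Prod.fst_add, Prod.snd_add, crossProduct, Matrix.mulVec,
        dotProduct, Matrix.transpose_apply, Fin.sum_univ_three, Pi.add_apply,
        Pi.smul_apply, Pi.neg_apply, smul_eq_mul, LinearMap.mk₂_apply, Matrix.cons_val_zero,
        Matrix.cons_val_one, Matrix.head_cons, Matrix.cons_val_two, Matrix.tail_cons,
        Fin.isValue, Fin.zero_eta, Fin.mk_one, Fin.reduceFinMk]
      simp only [Matrix.cons_val_zero, Matrix.cons_val_one, Matrix.head_cons, Matrix.cons_val_two,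
        Matrix.tail_cons, h2]
      ring
  · funext i
    fin_cases i <;>
    · simp only [octD, octMul, Prod.fst_add, Prod.snd_add, crossProduct, Matrix.mulVec,
        dotProduct, Matrix.transpose_apply, Fin.sum_univ_three, Pi.add_apply,
        Pi.smul_apply, Pi.neg_apply, smul_eq_mul, LinearMap.mk₂_apply, Matrix.cons_val_zero,
        Matrix.cons_val_one, Matrix.head_cons, Matrix.cons_val_two, Matrix.tail_cons,
        Fin.isValue, Fin.zero_eta, Fin.mk_one, Fin.reduceFinMk]
      simp only [Matrix.cons_val_zero, Matrix.cons_val_one, Matrix.head_cons, Matrix.cons_val_two,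
        Matrix.tail_cons, h2]
      ring
  · simp only [octD, octMul, Prod.fst_add, Prod.snd_add]
    simp only [crossProduct, Matrix.mulVec, dotProduct, Matrix.transpose_apply,
      Fin.sum_univ_three, Pi.add_apply, Pi.smul_apply, Pi.neg_apply, smul_eq_mul,
      LinearMap.mk₂_apply, Matrix.cons_val_zero, Matrix.cons_val_one, Matrix.head_cons,
      Matrix.cons_val_two, Matrix.tail_cons]
    ring
end

section
/- Let s¹, s², s₁, s₂ ∈ ℝ. There exists an invertible real 2×2 matrix A with (det A) · (A (0,1)ᵀ) = (s¹, s²)ᵀ and (s₁, s₂) · ((det A) A) = (1, 0) if and only if (s¹, s²) ≠ (0,0), (s₁, s₂) ≠ (0,0), and s₁ s¹ + s₂ s² = 0. -/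
open Matrix

lemma cbrt_cube (x : ℝ) (hx : x ≠ 0) :
    (Real.sign x * |x| ^ ((3:ℝ)⁻¹)) ^ 3 = x := by
  have habs : (|x| ^ ((3:ℝ)⁻¹)) ^ (3:ℕ) = |x| := by
    rw [← Real.rpow_natCast (|x| ^ ((3:ℝ)⁻¹)) 3, ← Real.rpow_mul (abs_nonneg x)]
    norm_num
  rw [mul_pow, habs]
  rcases lt_trichotomy x 0 with h | h | h
  · rw [Real.sign_of_neg h, abs_of_neg h]; norm_num
  · exact absurd h hx
  · rw [Real.sign_of_pos h, abs_of_pos h]; norm_num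

/-- Solvability of the adapted-lift equations: there is an invertible 2×2 matrix
`A` with `(det A) A (0,1)ᵀ = (s¹, s²)ᵀ` and `(s₁, s₂) (det A) A = (1, 0)` iff
`(s¹, s²) ≠ 0`, `(s₁, s₂) ≠ 0` and `s₁ s¹ + s₂ s² = 0`. -/
theorem adapted_lift_solvability (su1 su2 sl1 sl2 : ℝ) :
    (∃ A : Matrix (Fin 2) (Fin 2) ℝ, A.det ≠ 0 ∧
        A.det • (A *ᵥ ![0, 1]) = ![su1, su2] ∧
        ![sl1, sl2] ᵥ* (A.det • A) = ![1, 0])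
    ↔ ((su1 ≠ 0 ∨ su2 ≠ 0) ∧ (sl1 ≠ 0 ∨ sl2 ≠ 0) ∧
        sl1 * su1 + sl2 * su2 = 0) := by
  constructor
  · rintro ⟨A, hdet, h1, h2⟩
    have e1 := congrFun h1 0
    have e2 := congrFun h1 1
    have f1 := congrFun h2 0
    have f2 := congrFun h2 1
    rw [Matrix.det_fin_two] at hdet
    simp [Matrix.mulVec, Matrix.vecMul, dotProduct, Fin.sum_univ_two,
      Matrix.det_fin_two] at e1 e2 f1 f2
    refine ⟨?_, ?_, by linear_combination f2 - sl1 * e1 - sl2 * e2⟩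
    · by_contra h
      push_neg at h
      obtain ⟨h1', h2'⟩ := h
      rw [h1'] at e1; rw [h2'] at e2
      rcases mul_eq_zero.mp e1 with h' | h' <;>
      rcases mul_eq_zero.mp e2 with h'' | h''
      · exact hdet h'
      · exact hdet h'
      · exact hdet h''
      · exact hdet (by rw [h', h'']; ring)
    · by_contra h
      push_neg at h
      obtain ⟨h1', h2'⟩ := h
      rw [h1', h2'] at f1
      simp at f1
  · rintro ⟨hsu, hsl, hnull⟩
    have hN : su1 ^ 2 + su2 ^ 2 ≠ 0 := by
      rcases hsu with h | h <;> positivity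
    have hD : sl1 * su2 - sl2 * su1 ≠ 0 := by
      intro hD0
      have h1 : sl1 * (su1 ^ 2 + su2 ^ 2) = 0 := by
        linear_combination su1 * hnull + su2 * hD0
      have h2 : sl2 * (su1 ^ 2 + su2 ^ 2) = 0 := by
        linear_combination su2 * hnull - su1 * hD0
      rcases hsl with h | h
      · exact h ((mul_eq_zero.mp h1).resolve_right hN)
      · exact h ((mul_eq_zero.mp h2).resolve_right hN)
    obtain ⟨t, ht3⟩ : ∃ t : ℝ, t ^ 3 = (su1 ^ 2 + su2 ^ 2) / (sl1 * su2 - sl2 * su1) :=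
      ⟨_, cbrt_cube _ (div_ne_zero hN hD)⟩
    have ht : t ≠ 0 := by
      intro h0
      exact div_ne_zero hN hD (by rw [← ht3, h0]; ring)
    set A : Matrix (Fin 2) (Fin 2) ℝ :=
      !![t ^ 2 * su2 / (su1 ^ 2 + su2 ^ 2), su1 / t;
         -(t ^ 2 * su1) / (su1 ^ 2 + su2 ^ 2), su2 / t] with hA
    have hdetA : A.det = t := by
      rw [hA, Matrix.det_fin_two_of]
      field_simp
      ring
    refine ⟨A, by rw [hdetA]; exact ht, ?_, ?_⟩
    · rw [hdetA]
      funext i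
      fin_cases i <;>
        simp [hA, Matrix.mulVec, dotProduct, Fin.sum_univ_two] <;>
        field_simp
    · rw [eq_div_iff hD] at ht3
      rw [hdetA]
      funext i
      fin_cases i <;>
        simp [hA, Matrix.vecMul, dotProduct, Fin.sum_univ_two] <;>
        field_simp
      · linear_combination ht3
      · linear_combination hnull
end

section
/- Let Y be a real 3×3 matrix with trace zero, and let q₀, p₀ ∈ ℝ³ satisfy p₀ · q₀ = 1 and −Yᵀ p₀ = q₀ × (Y q₀). Then the curves q(t) := exp(tY) q₀ and p(t) := exp(−tYᵀ) p₀ satisfy p(t) · q(t) = 1 and p'(t) = q(t) × q'(t) for all t ∈ ℝ. -/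
open Matrix

attribute [local instance] Matrix.linftyOpNormedRing Matrix.linftyOpNormedAlgebra

lemma cross_trace_identity (Y : Matrix (Fin 3) (Fin 3) ℝ) (u v : Fin 3 → ℝ) :
    Yᵀ *ᵥ (u ⨯₃ v) + (Y *ᵥ u) ⨯₃ v + u ⨯₃ (Y *ᵥ v) = Y.trace • (u ⨯₃ v) := by
  ext i
  fin_cases i <;>
    simp [cross_apply, Matrix.mulVec, dotProduct, Matrix.trace, Matrix.diag,
      Matrix.vecHead, Matrix.vecTail, Matrix.transpose_apply, Function.comp,
      Fin.sum_univ_three] <;> ring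

noncomputable def mulVecCLM (v : Fin 3 → ℝ) :
    Matrix (Fin 3) (Fin 3) ℝ →L[ℝ] (Fin 3 → ℝ) :=
  LinearMap.toContinuousLinearMap
    { toFun := fun M => M *ᵥ v
      map_add' := fun A B => Matrix.add_mulVec A B v
      map_smul' := fun c A => Matrix.smul_mulVec c A v }

@[simp] lemma mulVecCLM_apply (v : Fin 3 → ℝ) (M : Matrix (Fin 3) (Fin 3) ℝ) :
    mulVecCLM v M = M *ᵥ v := rfl

noncomputable def crossCLM : (Fin 3 → ℝ) →L[ℝ] (Fin 3 → ℝ) →L[ℝ] (Fin 3 → ℝ) :=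
  LinearMap.toContinuousLinearMap
    ((LinearMap.toContinuousLinearMap :
        ((Fin 3 → ℝ) →ₗ[ℝ] (Fin 3 → ℝ)) ≃ₗ[ℝ] _).toLinearMap ∘ₗ crossProduct)

@[simp] lemma crossCLM_apply (u v : Fin 3 → ℝ) : crossCLM u v = u ⨯₃ v := rfl

noncomputable def transCLM :
    Matrix (Fin 3) (Fin 3) ℝ →L[ℝ] Matrix (Fin 3) (Fin 3) ℝ :=
  LinearMap.toContinuousLinearMap
    { toFun := fun M => Mᵀ
      map_add' := fun A B => Matrix.transpose_add A B
      map_smul' := fun c A => Matrix.transpose_smul c A }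

@[simp] lemma transCLM_apply (M : Matrix (Fin 3) (Fin 3) ℝ) : transCLM M = Mᵀ := rfl

noncomputable def mulVecCLM2 (M : Matrix (Fin 3) (Fin 3) ℝ) :
    (Fin 3 → ℝ) →L[ℝ] (Fin 3 → ℝ) :=
  LinearMap.toContinuousLinearMap M.mulVecLin

@[simp] lemma mulVecCLM2_apply (M : Matrix (Fin 3) (Fin 3) ℝ) (v : Fin 3 → ℝ) :
    mulVecCLM2 M v = M *ᵥ v := rfl

noncomputable def mvCLM :
    Matrix (Fin 3) (Fin 3) ℝ →L[ℝ] (Fin 3 → ℝ) →L[ℝ] (Fin 3 → ℝ) :=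
  LinearMap.toContinuousLinearMap
    { toFun := mulVecCLM2
      map_add' := fun A B => by
        ext v i
        simp [Matrix.add_mulVec]
      map_smul' := fun c A => by
        ext v i
        simp [Matrix.smul_mulVec] }

@[simp] lemma mvCLM_apply (M : Matrix (Fin 3) (Fin 3) ℝ) (v : Fin 3 → ℝ) :
    mvCLM M v = M *ᵥ v := rfl

/-- If the infinitesimal action of a traceless `Y` at `(q₀, p₀) ∈ Q⁵` is
horizontal for the Cartan–Engel distribution, then the one-parameter orbit
`q(t) = exp(tY) q₀`, `p(t) = exp(−tYᵀ) p₀` is an integral curve of the system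
`p ⬝ᵥ q = 1`, `p' = q × q'`. -/
theorem one_parameter_orbit_integral_curve (Y : Matrix (Fin 3) (Fin 3) ℝ)
    (hY : Y.trace = 0) (q₀ p₀ : Fin 3 → ℝ)
    (h1 : p₀ ⬝ᵥ q₀ = 1)
    (h2 : -(Y.transpose *ᵥ p₀) = q₀ ⨯₃ (Y *ᵥ q₀)) :
    ∀ t : ℝ,
      (NormedSpace.exp (-(t • Y.transpose)) *ᵥ p₀) ⬝ᵥ
          (NormedSpace.exp (t • Y) *ᵥ q₀) = 1 ∧
      deriv (fun s : ℝ => NormedSpace.exp (-(s • Y.transpose)) *ᵥ p₀) t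
        = (NormedSpace.exp (t • Y) *ᵥ q₀) ⨯₃
            deriv (fun s : ℝ => NormedSpace.exp (s • Y) *ᵥ q₀) t := by
  have hcomm : ∀ s : ℝ,
      NormedSpace.exp (s • Y) * Y = Y * NormedSpace.exp (s • Y) :=
    fun s => ((Commute.refl Y).smul_left s).exp_left
  have hDE : ∀ s : ℝ,
      NormedSpace.exp (-(s • Y)) * NormedSpace.exp (s • Y) = 1 := by
    intro s
    rw [← Matrix.exp_add_of_commute _ _ ((Commute.refl (s • Y)).neg_left),
      neg_add_cancel, NormedSpace.exp_zero]
  have hED : ∀ s : ℝ,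
      NormedSpace.exp (s • Y) * NormedSpace.exp (-(s • Y)) = 1 := by
    intro s
    rw [← Matrix.exp_add_of_commute _ _ ((Commute.refl (s • Y)).neg_right),
      add_neg_cancel, NormedSpace.exp_zero]
  have hTrans : ∀ s : ℝ,
      NormedSpace.exp (-(s • Yᵀ)) = (NormedSpace.exp (-(s • Y)))ᵀ := by
    intro s
    rw [← Matrix.exp_transpose]
    congr 1
  -- derivative of q-curve and of the auxiliary curve
  have hq : ∀ s : ℝ, HasDerivAt (fun r : ℝ => NormedSpace.exp (r • Y) *ᵥ q₀)
      ((NormedSpace.exp (s • Y) * Y) *ᵥ q₀) s :=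
    fun s => (mulVecCLM q₀).hasFDerivAt.comp_hasDerivAt s (hasDerivAt_exp_smul_const Y s)
  have hv : ∀ s : ℝ,
      HasDerivAt (fun r : ℝ => NormedSpace.exp (r • Y) *ᵥ (Y *ᵥ q₀))
      ((NormedSpace.exp (s • Y) * Y) *ᵥ (Y *ᵥ q₀)) s :=
    fun s => (mulVecCLM (Y *ᵥ q₀)).hasFDerivAt.comp_hasDerivAt s
      (hasDerivAt_exp_smul_const Y s)
  -- the conserved quantity
  set G : ℝ → Fin 3 → ℝ := fun s =>
    (NormedSpace.exp (s • Y))ᵀ *ᵥ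
      ((NormedSpace.exp (s • Y) *ᵥ q₀) ⨯₃
        (NormedSpace.exp (s • Y) *ᵥ (Y *ᵥ q₀))) with hGdef
  have hz : ∀ s : ℝ, HasDerivAt G 0 s := by
    intro s
    set A := NormedSpace.exp (s • Y) with hA
    have h1s : HasDerivAt (fun r : ℝ => mvCLM (NormedSpace.exp (r • Y))ᵀ)
        (mvCLM ((A * Y)ᵀ)) s :=
      mvCLM.hasFDerivAt.comp_hasDerivAt s
        (transCLM.hasFDerivAt.comp_hasDerivAt s (hasDerivAt_exp_smul_const Y s))
    have h2s : HasDerivAt (fun r : ℝ => crossCLM (NormedSpace.exp (r • Y) *ᵥ q₀))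
        (crossCLM ((A * Y) *ᵥ q₀)) s :=
      crossCLM.hasFDerivAt.comp_hasDerivAt s (hq s)
    have h4s := (h1s.clm_apply (h2s.clm_apply (hv s)) : HasDerivAt G _ s)
    have hval :
        mvCLM ((A * Y)ᵀ) ((A *ᵥ q₀) ⨯₃ (A *ᵥ (Y *ᵥ q₀))) +
          mvCLM Aᵀ (crossCLM ((A * Y) *ᵥ q₀) (A *ᵥ (Y *ᵥ q₀)) +
            crossCLM (A *ᵥ q₀) ((A * Y) *ᵥ (Y *ᵥ q₀))) = 0 := by
      have hYA : (A * Y) *ᵥ q₀ = Y *ᵥ (A *ᵥ q₀) := by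
        rw [hcomm s, ← Matrix.mulVec_mulVec]
      have hYA' : (A * Y) *ᵥ (Y *ᵥ q₀) = Y *ᵥ (A *ᵥ (Y *ᵥ q₀)) := by
        rw [hcomm s, ← Matrix.mulVec_mulVec]
      have hAT : (A * Y)ᵀ = Aᵀ * Yᵀ := by rw [hcomm s, Matrix.transpose_mul]
      simp only [mulVecCLM_apply, crossCLM_apply, mvCLM_apply, hYA, hYA', hAT,
        ← Matrix.mulVec_mulVec]
      rw [← Matrix.mulVec_add, ← add_assoc, cross_trace_identity, hY, zero_smul,
        Matrix.mulVec_zero]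
    rw [hval] at h4s
    exact h4s
  have hGconst : ∀ s : ℝ, G s = G 0 :=
    fun s => is_const_of_deriv_eq_zero (fun r => (hz r).differentiableAt)
      (fun r => (hz r).deriv) s 0
  have hG0 : G 0 = q₀ ⨯₃ (Y *ᵥ q₀) := by
    simp [hGdef, NormedSpace.exp_zero]
  intro t
  constructor
  · rw [hTrans t, Matrix.mulVec_transpose, dotProduct_mulVec,
      Matrix.vecMul_vecMul, hDE t, Matrix.vecMul_one, h1]
  · have hp : HasDerivAt (fun s : ℝ => NormedSpace.exp (-(s • Yᵀ)) *ᵥ p₀)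
        ((NormedSpace.exp (t • (-Yᵀ)) * (-Yᵀ)) *ᵥ p₀) t := by
      have h := (mulVecCLM p₀).hasFDerivAt.comp_hasDerivAt t
        (hasDerivAt_exp_smul_const (-Yᵀ) t)
      exact h.congr_of_eventuallyEq
        (Filter.Eventually.of_forall fun s => by
          simp only [Function.comp_apply, mulVecCLM_apply, smul_neg]; rfl)
    rw [hp.deriv, (hq t).deriv]
    have hGt := (hGconst t).trans hG0
    have hexp : NormedSpace.exp (t • (-Yᵀ)) = (NormedSpace.exp (-(t • Y)))ᵀ := by
      rw [smul_neg]; exact hTrans t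
    calc (NormedSpace.exp (t • (-Yᵀ)) * (-Yᵀ)) *ᵥ p₀
        = (NormedSpace.exp (-(t • Y)))ᵀ *ᵥ ((-Yᵀ) *ᵥ p₀) := by
          rw [hexp, ← Matrix.mulVec_mulVec]
      _ = (NormedSpace.exp (-(t • Y)))ᵀ *ᵥ (q₀ ⨯₃ (Y *ᵥ q₀)) := by
          rw [Matrix.neg_mulVec, h2]
      _ = (NormedSpace.exp (-(t • Y)))ᵀ *ᵥ (G t) := by rw [hGt]
      _ = ((NormedSpace.exp (t • Y) * NormedSpace.exp (-(t • Y)))ᵀ) *ᵥ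
            ((NormedSpace.exp (t • Y) *ᵥ q₀) ⨯₃
              (NormedSpace.exp (t • Y) *ᵥ (Y *ᵥ q₀))) := by
          rw [hGdef, Matrix.transpose_mul, Matrix.mulVec_mulVec]
      _ = (NormedSpace.exp (t • Y) *ᵥ q₀) ⨯₃
            ((NormedSpace.exp (t • Y) * Y) *ᵥ q₀) := by
          rw [hED t, Matrix.transpose_one, Matrix.one_mulVec, ← Matrix.mulVec_mulVec]
end
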